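/- Let a ≥ 1 and b ≥ 1 be integers, let G be a finite simple (a,b)-graph, and let M be a matching of G. Then the contracted graph G_M is (4a−3)-degenerate, i.e., every nonempty subgraph of G_M contains a vertex of degree at most 4a−3. -/

import Mathlib

/-- `M` is a matching of `G`, viewed as a set of edges:
all edges lie in `G` and are pairwise non-adjacent (share no vertex). -/
def IsMatchingSet {V : Type*} (G : SimpleGraph V) (M : Set (Sym2 V)) : Prop :=
  M ⊆ G.edgeSet ∧ ∀ e ∈ M, ∀ f ∈ M, e ≠ f → ∀ v : V, ¬(v ∈ e ∧ v ∈ f)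

/-- The graph obtained from `G` by contracting each edge in `M`. -/
def Contract {V : Type*} (G : SimpleGraph V) (M : Set (Sym2 V)) :
    SimpleGraph (Quot fun u v : V => s(u, v) ∈ M) where
  Adj x y := x ≠ y ∧ ∃ u v : V, G.Adj u v ∧ Quot.mk _ u = x ∧ Quot.mk _ v = y
  symm := by
    constructor
    rintro x y ⟨hxy, u, v, huv, hu, hv⟩
    exact ⟨hxy.symm, v, u, huv.symm, hv, hu⟩
  loopless := by
    constructor
    rintro x ⟨hx, -⟩
    exact hx rfl

section Aux

variable {V : Type*} {G : SimpleGraph V} {M : Set (Sym2 V)}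

lemma quot_eq_iff (hM : IsMatchingSet G M) (u v : V) :
    Quot.mk (fun u v : V => s(u, v) ∈ M) u = Quot.mk _ v ↔ (u = v ∨ s(u, v) ∈ M) := by
  constructor
  · rw [Quot.eq]
    intro h
    induction h with
    | rel x y hxy => exact Or.inr hxy
    | refl x => exact Or.inl rfl
    | symm x y _ ih =>
      rcases ih with h | h
      · exact Or.inl h.symm
      · exact Or.inr (by rwa [Sym2.eq_swap])
    | trans x y z _ _ ih1 ih2 =>
      rcases ih1 with h1 | h1
      · rwa [h1]
      · rcases ih2 with h2 | h2
        · rw [← h2]; exact Or.inr h1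
        · by_cases hxz : x = z
          · exact Or.inl hxz
          · by_cases he : s(x, y) = s(y, z)
            · rw [Sym2.eq_iff] at he
              rcases he with ⟨h3, h4⟩ | ⟨h3, h4⟩
              · exact Or.inl (h3.trans h4)
              · exact absurd h3 hxz
            · exact absurd ⟨Sym2.mem_mk_right x y, Sym2.mem_mk_left y z⟩
                (hM.2 _ h1 _ h2 he y)
  · rintro (rfl | h)
    · rfl
    · exact Quot.sound h

end Aux

/-- If `G` is an `(a,b)`-graph with `a ≥ 1`, `b ≥ 1`, and `M` is a matching of `G`,
then the contracted graph `G_M` is `(4a−3)`-degenerate: every nonempty subgraph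
of `G_M` contains a vertex of degree at most `4a−3`. -/
theorem stmt_1 {V : Type*} [Fintype V] (G : SimpleGraph V) (a b : ℤ)
    (ha : 1 ≤ a) (hb : 1 ≤ b)
    (hG : ∀ G' : G.Subgraph, G'.verts.Nonempty →
      (G'.edgeSet.ncard : ℤ) ≤ a * (G'.verts.ncard : ℤ) - b)
    (M : Set (Sym2 V)) (hM : IsMatchingSet G M) :
    ∀ H : (Contract G M).Subgraph, H.verts.Nonempty →
      ∃ v ∈ H.verts, ((H.neighborSet v).ncard : ℤ) ≤ 4 * a - 3 := by
  classical
  intro H hH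
  by_contra hcon
  push_neg at hcon
  set r : V → V → Prop := fun u v : V => s(u, v) ∈ M with hr
  haveI : Fintype (Quot r) := Fintype.ofSurjective (Quot.mk r) Quot.mk_surjective
  set q : V → Quot r := Quot.mk r with hq
  have hqeq : ∀ u v : V, q u = q v ↔ (u = v ∨ s(u, v) ∈ M) := quot_eq_iff hM
  have hdeg : ∀ v ∈ H.verts, (4 * a - 2 : ℤ) ≤ ((H.neighborSet v).ncard : ℤ) := by
    intro v hv
    have := hcon v hv
    omega
  set G' : G.Subgraph :=
    { verts := q ⁻¹' H.verts
      Adj := fun u v => G.Adj u v ∧ (H.Adj (q u) (q v) ∨ (s(u, v) ∈ M ∧ q u ∈ H.verts))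
      adj_sub := fun h => h.1
      edge_vert := by
        rintro u v ⟨hadj, h2 | ⟨hm, hv⟩⟩
        · exact H.edge_vert h2
        · exact hv
      symm := by
        constructor
        rintro u v ⟨hadj, h2 | ⟨hm, hv⟩⟩
        · exact ⟨hadj.symm, Or.inl h2.symm⟩
        · refine ⟨hadj.symm, Or.inr ⟨by rwa [Sym2.eq_swap], ?_⟩⟩
          have hquv : q u = q v := (hqeq u v).2 (Or.inr hm)
          rwa [← hquv] } with hG'def
  set D : Set (Quot r) := {x | x ∈ H.verts ∧ ∃ u v : V, s(u, v) ∈ M ∧ q u = x} with hD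
  set n : ℕ := H.verts.ncard with hn
  set k : ℕ := D.ncard with hk
  have hDsub : D ⊆ H.verts := fun x hx => hx.1
  have hkn : k ≤ n := Set.ncard_le_ncard hDsub (Set.toFinite _)
  -- vertex count
  have hvert : G'.verts.ncard ≤ n + k := by
    refine (Set.ncard_le_ncard_of_injOn
        (t := ((fun x => (x, true)) '' H.verts) ∪ ((fun x => (x, false)) '' D))
        (fun u => (q u, decide (u = Quot.out (q u)))) ?_ ?_ (Set.toFinite _)).trans ?_
    · intro u hu
      have hqu : q u ∈ H.verts := hu
      by_cases h : u = Quot.out (q u)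
      · exact Or.inl ⟨q u, hqu, by show (q u, true) = (q u, decide (u = (q u).out)); rw [decide_eq_true h]⟩
      · refine Or.inr ⟨q u, ⟨hqu, u, Quot.out (q u), ?_, rfl⟩, by show (q u, false) = (q u, decide (u = (q u).out)); rw [decide_eq_false h]⟩
        have hthis : q u = q (Quot.out (q u)) := (Quot.out_eq (q u)).symm
        rcases (hqeq u (Quot.out (q u))).1 hthis with h' | h'
        · exact absurd h' h
        · exact h'
    · intro u hu v hv huv
      have h1 : q u = q v := congrArg Prod.fst huv
      have h2' := congrArg Prod.snd huv
      rw [decide_eq_decide, ← h1] at h2'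
      rcases (hqeq u v).1 h1 with h | h
      · exact h
      · by_contra hne
        set o : V := Quot.out (q u) with ho
        have hqo : q o = q u := Quot.out_eq (q u)
        by_cases hu' : u = o
        · exact hne (hu'.trans (h2'.1 hu').symm)
        · have hv' : ¬ v = o := fun hc => hu' (h2'.2 hc)
          have hmu : s(u, o) ∈ M := by
            rcases (hqeq u o).1 hqo.symm with h' | h'
            · exact absurd h' hu'
            · exact h'
          have hmv : s(v, o) ∈ M := by
            have hthis : q v = q o := h1 ▸ hqo.symm
            rcases (hqeq v o).1 hthis with h' | h'
            · exact absurd h' hv'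
            · exact h'
          by_cases he : s(u, o) = s(v, o)
          · rw [Sym2.eq_iff] at he
            rcases he with ⟨h3, _⟩ | ⟨h3, h4⟩
            · exact hne h3
            · exact hne (h3.trans h4)
          · exact hM.2 _ hmu _ hmv he o ⟨Sym2.mem_mk_right u o, Sym2.mem_mk_right v o⟩
    · calc (((fun x => (x, true)) '' H.verts) ∪ ((fun x => (x, false)) '' D)).ncard
          ≤ ((fun x => (x, true)) '' H.verts).ncard + ((fun x => (x, false)) '' D).ncard :=
          Set.ncard_union_le _ _
      _ = n + k := by
          rw [Set.ncard_image_of_injective _ (fun x y h => congrArg Prod.fst h),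
            Set.ncard_image_of_injective _ (fun x y h => congrArg Prod.fst h)]
  -- edge count
  have hedge : H.edgeSet.ncard + k ≤ G'.edgeSet.ncard := by
    set p : Sym2 V → Sym2 (Quot r) := Sym2.map q with hp
    have hsub : H.edgeSet ∪ ((fun x => s(x, x)) '' D) ⊆ p '' G'.edgeSet := by
      rintro e (he | ⟨x, hx, rfl⟩)
      · induction e with
        | h x y =>
          rw [SimpleGraph.Subgraph.mem_edgeSet] at he
          obtain ⟨hne, u, v, huv, hu, hv⟩ := H.adj_sub he
          refine ⟨s(u, v), ?_, ?_⟩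
          · rw [SimpleGraph.Subgraph.mem_edgeSet]
            refine ⟨huv, Or.inl ?_⟩
            show H.Adj (q u) (q v)
            rw [show q u = x from hu, show q v = y from hv]
            exact he
          · simp only [hp, Sym2.map_pair_eq]
            rw [show q u = x from hu, show q v = y from hv]
      · obtain ⟨hxH, u, v, hm, hu⟩ := hx
        have huv : G.Adj u v := (SimpleGraph.mem_edgeSet G).1 (hM.1 hm)
        refine ⟨s(u, v), ?_, ?_⟩
        · rw [SimpleGraph.Subgraph.mem_edgeSet]
          exact ⟨huv, Or.inr ⟨hm, hu ▸ hxH⟩⟩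
        · have hqv : q v = q u := ((hqeq u v).2 (Or.inr hm)).symm
          simp only [hp, Sym2.map_pair_eq]
          rw [hqv, hu]
    have hdisj : Disjoint H.edgeSet ((fun x => s(x, x)) '' D) := by
      rw [Set.disjoint_left]
      rintro e he ⟨x, hx, rfl⟩
      rw [SimpleGraph.Subgraph.mem_edgeSet] at he
      exact (H.adj_sub he).1 rfl
    have hdiaginj : Function.Injective (fun x : Quot r => s(x, x)) := by
      intro x y h
      rw [Sym2.eq_iff] at h
      rcases h with ⟨h1, _⟩ | ⟨h1, _⟩ <;> exact h1
    calc H.edgeSet.ncard + k = (H.edgeSet ∪ ((fun x => s(x, x)) '' D)).ncard := by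
          rw [Set.ncard_union_eq hdisj (Set.toFinite _) (Set.toFinite _),
            Set.ncard_image_of_injective _ hdiaginj]
      _ ≤ (p '' G'.edgeSet).ncard := Set.ncard_le_ncard hsub (Set.toFinite _)
      _ ≤ G'.edgeSet.ncard := Set.ncard_image_le (Set.toFinite _)
  -- handshake: degree-sum for H
  have hcardverts : Fintype.card ↥H.verts = n := by
    rw [hn, ← Nat.card_coe_set_eq, Nat.card_eq_fintype_card]
  have hand : ∑ v : ↥H.verts, (H.neighborSet ↑v).ncard = 2 * H.edgeSet.ncard := by
    have h1 := H.coe.sum_degrees_eq_twice_card_edges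
    simp only [SimpleGraph.degree, SimpleGraph.edgeFinset_card] at h1
    simp only [SimpleGraph.neighborFinset, Set.toFinset_card, ← Nat.card_eq_fintype_card,
      Nat.card_coe_set_eq] at h1
    have h2 : ∀ v : ↥H.verts, (H.coe.neighborSet v).ncard = (H.neighborSet ↑v).ncard := by
      intro v
      rw [← Nat.card_coe_set_eq, ← Nat.card_coe_set_eq]
      exact Nat.card_congr (SimpleGraph.Subgraph.coeNeighborSetEquiv v)
    have h3 : H.coe.edgeSet.ncard = H.edgeSet.ncard := by
      rw [← SimpleGraph.Subgraph.image_coe_edgeSet_coe,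
        Set.ncard_image_of_injective _ (Sym2.map.injective Subtype.coe_injective)]
    rw [h3] at h1
    exact (Finset.sum_congr rfl fun v _ => (h2 v).symm).trans h1
  have hsum : (4 * a - 2) * (n : ℤ) ≤ 2 * (H.edgeSet.ncard : ℤ) := by
    have : ((∑ v : ↥H.verts, (H.neighborSet ↑v).ncard : ℕ) : ℤ) = 2 * (H.edgeSet.ncard : ℤ) := by
      exact_mod_cast congrArg (Nat.cast : ℕ → ℤ) hand
    rw [← this]
    push_cast
    calc (4 * a - 2) * (n : ℤ) = ∑ _v : ↥H.verts, (4 * a - 2 : ℤ) := by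
          rw [Finset.sum_const, Finset.card_univ, hcardverts, nsmul_eq_mul, mul_comm]
      _ ≤ ∑ v : ↥H.verts, ((H.neighborSet ↑v).ncard : ℤ) :=
          Finset.sum_le_sum fun v _ => hdeg ↑v v.2
  -- apply the (a,b)-property
  obtain ⟨x, hx⟩ := hH
  obtain ⟨u0, hu0⟩ := Quot.exists_rep x
  have hne : G'.verts.Nonempty := ⟨u0, by show q u0 ∈ H.verts; rw [hq]; rw [hu0]; exact hx⟩
  have hab := hG G' hne
  have h1 : (G'.edgeSet.ncard : ℤ) ≤ a * ((n : ℤ) + k) - b := by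
    refine le_trans hab ?_
    have hc : (G'.verts.ncard : ℤ) ≤ (n : ℤ) + k := by exact_mod_cast hvert
    nlinarith
  have h2 : (H.edgeSet.ncard : ℤ) + k ≤ (G'.edgeSet.ncard : ℤ) := by exact_mod_cast hedge
  have h3 : (k : ℤ) ≤ n := by exact_mod_cast hkn
  nlinarith [mul_nonneg (sub_nonneg.2 ha) (sub_nonneg.2 h3)]
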